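/- Let x₀, y₀ ∈ ℕ, let g : ℕ × ℕ → ℝ and K : ℕ × ℕ × ℕ × ℕ × ℝ → ℝ, and let q, r : ℕ × ℕ → [0,∞) be such that |K(x,y,η,τ,u) − K(x,y,η,τ,v)| ≤ q(x,y) r(η,τ) |u − v| for all arguments and all u, v ∈ ℝ. Let ε₁, ε₂ ≥ 0 and let u₁, u₂ : ℕ × ℕ → ℝ be such that, for i = 1, 2 and all x ≥ x₀, y ≥ y₀, |u_i(x,y) − ( g(x,y) + Σ_{s=x₀}^{x−1} Σ_{η=x₀}^{s−1} Σ_{τ=y₀}^{y−1} K(x,y,η,τ,u_i(η,τ)) )| ≤ ε_i. Then for all x ≥ x₀ and y ≥ y₀, |u₁(x,y) − u₂(x,y)| ≤ (ε₁ + ε₂) · [ 1 + q(x,y) · ( Σ_{s=x₀}^{x−1} Σ_{η=x₀}^{s−1} Σ_{τ=y₀}^{y−1} r(η,τ) ) · ∏_{s=x₀}^{x−1} ( 1 + Σ_{η=x₀}^{s−1} Σ_{τ=y₀}^{y−1} r(η,τ) q(η,τ) ) ]. -/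

import Mathlib

private lemma gronwall_aux (x₀ : ℕ) (ε : ℝ) (hε : 0 ≤ ε) (φ ρ A : ℕ → ℝ)
    (hρ : ∀ n, 0 ≤ ρ n) (hA : ∀ n, 0 ≤ A n)
    (hφ0 : φ x₀ ≤ 0)
    (hstep : ∀ n, x₀ ≤ n → φ (n + 1) ≤ (1 + A n) * φ n + ε * ρ n) :
    ∀ n, x₀ ≤ n → φ n ≤ ε * (∑ s ∈ Finset.Ico x₀ n, ρ s) *
      ∏ s ∈ Finset.Ico x₀ n, (1 + A s) := by
  intro n hn
  induction n, hn using Nat.le_induction with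
  | base => simpa using hφ0
  | succ n hn ih =>
    have hR : 0 ≤ ∑ s ∈ Finset.Ico x₀ n, ρ s := Finset.sum_nonneg fun s _ => hρ s
    have hP : 1 ≤ ∏ s ∈ Finset.Ico x₀ n, (1 + A s) := by
      calc (1:ℝ) = ∏ s ∈ Finset.Ico x₀ n, (1:ℝ) := by simp
        _ ≤ ∏ s ∈ Finset.Ico x₀ n, (1 + A s) :=
            Finset.prod_le_prod (fun i _ => zero_le_one) (fun i _ => by linarith [hA i])
    rw [Finset.sum_Ico_succ_top hn, Finset.prod_Ico_succ_top hn]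
    have h1 := hstep n hn
    have h1A : (0:ℝ) ≤ 1 + A n := by linarith [hA n]
    have hP' : 1 ≤ (∏ s ∈ Finset.Ico x₀ n, (1 + A s)) * (1 + A n) := by
      nlinarith [hP, hA n]
    calc φ (n + 1) ≤ (1 + A n) * φ n + ε * ρ n := h1
      _ ≤ (1 + A n) * (ε * (∑ s ∈ Finset.Ico x₀ n, ρ s) * ∏ s ∈ Finset.Ico x₀ n, (1 + A s))
            + ε * ρ n * ((∏ s ∈ Finset.Ico x₀ n, (1 + A s)) * (1 + A n)) := by
          have h2 := mul_le_mul_of_nonneg_left ih h1A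
          have h3 := le_mul_of_one_le_right (mul_nonneg hε (hρ n)) hP'
          linarith
      _ = ε * ((∑ s ∈ Finset.Ico x₀ n, ρ s) + ρ n) *
            ((∏ s ∈ Finset.Ico x₀ n, (1 + A s)) * (1 + A n)) := by ring

/-- Discrete (𝕋₁ = 𝕋₂ = ℤ) case of Theorem 3.2: closeness of two
ε-approximate solutions of the sum equation
u(x,y) = g(x,y) + ΣΣΣ K(x,y,η,τ,u(η,τ)). -/
theorem stmt_11 (x₀ y₀ : ℕ) (g : ℕ → ℕ → ℝ) (K : ℕ → ℕ → ℕ → ℕ → ℝ → ℝ)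
    (q r : ℕ → ℕ → ℝ) (ε₁ ε₂ : ℝ) (u₁ u₂ : ℕ → ℕ → ℝ)
    (hq_nonneg : ∀ x y, 0 ≤ q x y)
    (hr_nonneg : ∀ x y, 0 ≤ r x y)
    (hK_lip : ∀ x y η τ, ∀ a b : ℝ,
      |K x y η τ a - K x y η τ b| ≤ q x y * r η τ * |a - b|)
    (hε₁ : 0 ≤ ε₁) (hε₂ : 0 ≤ ε₂)
    (hu₁_approx : ∀ x y, x₀ ≤ x → y₀ ≤ y →
      |u₁ x y - (g x y + ∑ s ∈ Finset.Ico x₀ x, ∑ η ∈ Finset.Ico x₀ s,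
        ∑ τ ∈ Finset.Ico y₀ y, K x y η τ (u₁ η τ))| ≤ ε₁)
    (hu₂_approx : ∀ x y, x₀ ≤ x → y₀ ≤ y →
      |u₂ x y - (g x y + ∑ s ∈ Finset.Ico x₀ x, ∑ η ∈ Finset.Ico x₀ s,
        ∑ τ ∈ Finset.Ico y₀ y, K x y η τ (u₂ η τ))| ≤ ε₂) :
    ∀ x y, x₀ ≤ x → y₀ ≤ y →
      |u₁ x y - u₂ x y| ≤ (ε₁ + ε₂) *
        (1 + q x y * (∑ s ∈ Finset.Ico x₀ x, ∑ η ∈ Finset.Ico x₀ s,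
            ∑ τ ∈ Finset.Ico y₀ y, r η τ) *
          ∏ s ∈ Finset.Ico x₀ x,
            (1 + ∑ η ∈ Finset.Ico x₀ s, ∑ τ ∈ Finset.Ico y₀ y,
              r η τ * q η τ)) := by
  intro x y hx hy
  have hε0 : 0 ≤ ε₁ + ε₂ := add_nonneg hε₁ hε₂
  set m : ℕ → ℕ → ℝ := fun p t => ∑ s ∈ Finset.Ico x₀ p, ∑ a ∈ Finset.Ico x₀ s,
      ∑ b ∈ Finset.Ico y₀ t, r a b * |u₁ a b - u₂ a b| with hm
  have hm0 : ∀ p t, 0 ≤ m p t := by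
    intro p t
    exact Finset.sum_nonneg fun s _ => Finset.sum_nonneg fun a _ =>
      Finset.sum_nonneg fun b _ => mul_nonneg (hr_nonneg a b) (abs_nonneg _)
  have hmono2 : ∀ p t, t ≤ y → m p t ≤ m p y := by
    intro p t ht
    refine Finset.sum_le_sum fun s _ => Finset.sum_le_sum fun a _ => ?_
    exact Finset.sum_le_sum_of_subset_of_nonneg (Finset.Ico_subset_Ico_right ht)
      fun b _ _ => mul_nonneg (hr_nonneg a b) (abs_nonneg _)
  have hmono1 : ∀ p n, p ≤ n → m p y ≤ m n y := by
    intro p n h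
    exact Finset.sum_le_sum_of_subset_of_nonneg (Finset.Ico_subset_Ico_right h)
      fun s _ _ => Finset.sum_nonneg fun a _ => Finset.sum_nonneg fun b _ =>
        mul_nonneg (hr_nonneg a b) (abs_nonneg _)
  have hw : ∀ p t, x₀ ≤ p → y₀ ≤ t →
      |u₁ p t - u₂ p t| ≤ (ε₁ + ε₂) + q p t * m p t := by
    intro p t hp ht
    have h1 := hu₁_approx p t hp ht
    have h2 := hu₂_approx p t hp ht
    set S₁ := ∑ s ∈ Finset.Ico x₀ p, ∑ a ∈ Finset.Ico x₀ s,
        ∑ b ∈ Finset.Ico y₀ t, K p t a b (u₁ a b) with hS1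
    set S₂ := ∑ s ∈ Finset.Ico x₀ p, ∑ a ∈ Finset.Ico x₀ s,
        ∑ b ∈ Finset.Ico y₀ t, K p t a b (u₂ a b) with hS2
    have key : |S₁ - S₂| ≤ q p t * m p t := by
      have e1 : q p t * m p t = ∑ s ∈ Finset.Ico x₀ p, ∑ a ∈ Finset.Ico x₀ s,
          ∑ b ∈ Finset.Ico y₀ t, q p t * (r a b * |u₁ a b - u₂ a b|) := by
        simp [hm, Finset.mul_sum]
      rw [hS1, hS2]
      simp only [← Finset.sum_sub_distrib]
      rw [e1]
      refine (Finset.abs_sum_le_sum_abs _ _).trans (Finset.sum_le_sum fun s _ => ?_)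
      refine (Finset.abs_sum_le_sum_abs _ _).trans (Finset.sum_le_sum fun a _ => ?_)
      refine (Finset.abs_sum_le_sum_abs _ _).trans (Finset.sum_le_sum fun b _ => ?_)
      simpa [mul_assoc] using hK_lip p t a b (u₁ a b) (u₂ a b)
    have e2 : u₁ p t - u₂ p t =
        (u₁ p t - (g p t + S₁)) + (S₁ - S₂) - (u₂ p t - (g p t + S₂)) := by ring
    calc |u₁ p t - u₂ p t|
        = |(u₁ p t - (g p t + S₁)) + (S₁ - S₂) - (u₂ p t - (g p t + S₂))| := by rw [e2]
      _ ≤ |(u₁ p t - (g p t + S₁)) + (S₁ - S₂)| + |u₂ p t - (g p t + S₂)| :=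
          abs_sub _ _
      _ ≤ |u₁ p t - (g p t + S₁)| + |S₁ - S₂| + |u₂ p t - (g p t + S₂)| := by
          have := abs_add_le (u₁ p t - (g p t + S₁)) (S₁ - S₂)
          linarith
      _ ≤ ε₁ + (q p t * m p t) + ε₂ := by
          have := key; linarith
      _ = (ε₁ + ε₂) + q p t * m p t := by ring
  have hstep : ∀ n, x₀ ≤ n → m (n + 1) y ≤
      (1 + (∑ a ∈ Finset.Ico x₀ n, ∑ b ∈ Finset.Ico y₀ y, r a b * q a b)) * m n y
        + (ε₁ + ε₂) * (∑ a ∈ Finset.Ico x₀ n, ∑ b ∈ Finset.Ico y₀ y, r a b) := by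
    intro n hn
    have hsplit : m (n + 1) y = m n y +
        ∑ a ∈ Finset.Ico x₀ n, ∑ b ∈ Finset.Ico y₀ y, r a b * |u₁ a b - u₂ a b| := by
      simp [hm, Finset.sum_Ico_succ_top hn]
    rw [hsplit]
    have hbound : ∑ a ∈ Finset.Ico x₀ n, ∑ b ∈ Finset.Ico y₀ y, r a b * |u₁ a b - u₂ a b|
        ≤ ∑ a ∈ Finset.Ico x₀ n, ∑ b ∈ Finset.Ico y₀ y,
            (r a b * (ε₁ + ε₂) + r a b * q a b * m n y) := by
      refine Finset.sum_le_sum fun a ha => Finset.sum_le_sum fun b hb => ?_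
      obtain ⟨ha1, ha2⟩ := Finset.mem_Ico.mp ha
      obtain ⟨hb1, hb2⟩ := Finset.mem_Ico.mp hb
      have h1 : |u₁ a b - u₂ a b| ≤ (ε₁ + ε₂) + q a b * m a b := hw a b ha1 hb1
      have h2 : m a b ≤ m n y := (hmono2 a b hb2.le).trans (hmono1 a n ha2.le)
      have h3 : q a b * m a b ≤ q a b * m n y :=
        mul_le_mul_of_nonneg_left h2 (hq_nonneg a b)
      have h4 : |u₁ a b - u₂ a b| ≤ (ε₁ + ε₂) + q a b * m n y := by linarith
      calc r a b * |u₁ a b - u₂ a b| ≤ r a b * ((ε₁ + ε₂) + q a b * m n y) :=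
            mul_le_mul_of_nonneg_left h4 (hr_nonneg a b)
        _ = r a b * (ε₁ + ε₂) + r a b * q a b * m n y := by ring
    have heq : ∑ a ∈ Finset.Ico x₀ n, ∑ b ∈ Finset.Ico y₀ y,
          (r a b * (ε₁ + ε₂) + r a b * q a b * m n y)
        = (ε₁ + ε₂) * (∑ a ∈ Finset.Ico x₀ n, ∑ b ∈ Finset.Ico y₀ y, r a b)
          + (∑ a ∈ Finset.Ico x₀ n, ∑ b ∈ Finset.Ico y₀ y, r a b * q a b) * m n y := by
      simp only [Finset.sum_add_distrib, ← Finset.sum_mul]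
      ring
    rw [heq] at hbound
    linarith
  have main := gronwall_aux x₀ (ε₁ + ε₂) hε0 (fun n => m n y)
      (fun s => ∑ a ∈ Finset.Ico x₀ s, ∑ b ∈ Finset.Ico y₀ y, r a b)
      (fun s => ∑ a ∈ Finset.Ico x₀ s, ∑ b ∈ Finset.Ico y₀ y, r a b * q a b)
      (fun s => Finset.sum_nonneg fun a _ => Finset.sum_nonneg fun b _ => hr_nonneg a b)
      (fun s => Finset.sum_nonneg fun a _ => Finset.sum_nonneg fun b _ =>
        mul_nonneg (hr_nonneg a b) (hq_nonneg a b))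
      (by simp [hm]) hstep x hx
  have hfin := hw x y hx hy
  have hq := hq_nonneg x y
  have := mul_le_mul_of_nonneg_left main hq
  nlinarith [this, hfin]
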